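/- (Reformulation of the demographic-parity problem.) Assume Δ_UM > 0. Then the maximum of U(π) over policies π constrained by S_A(π) = S_B(π) equals the maximum, over real variables z_{yc} for (y,c) ∈ 𝒯_e satisfying 0 ≤ z_{yc} ≤ p(y|c) and ∑_{(y,c) ∈ 𝒯_e} z_{yc} = Δ_UM, of E[Y_+] − ∑_{(y,c) ∈ 𝒯_e} z_{yc}·p(c)·|y|, where E[Y_+] = ∑_{c, y>0} p(c,y)·y and 𝒯_e = {(y,A) : y > 0, p(y|A) > 0} ∪ {(y,B) : y < 0, p(y|B) > 0}. -/

import Mathlib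

/-!
Static setting: `Y` is a finite set of nonzero real qualifications; the two groups
`A`/`B` are encoded as `true`/`false`; `p c y` is the joint pmf on group × qualification.
-/

open Finset Filter Topology
open scoped Classical

noncomputable section

/-- Marginal probability of group `c`. -/
def pG (Y : Finset ℝ) (p : Bool → ℝ → ℝ) (c : Bool) : ℝ := ∑ y ∈ Y, p c y

/-- Conditional pmf `p(y|c)`. -/
def pCond (Y : Finset ℝ) (p : Bool → ℝ → ℝ) (c : Bool) (y : ℝ) : ℝ := p c y / pG Y p c

/-- `p` is a pmf on `{A,B} × Y`, with positive group marginals, and all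
qualifications in `Y` are nonzero. -/
def IsPMF (Y : Finset ℝ) (p : Bool → ℝ → ℝ) : Prop :=
  (∀ y ∈ Y, y ≠ 0) ∧ (∀ c, ∀ y ∈ Y, 0 ≤ p c y) ∧
    (∑ c : Bool, ∑ y ∈ Y, p c y) = 1 ∧ (∀ c, 0 < pG Y p c)

/-- A policy assigns selection probabilities in `[0,1]`. -/
def Admissible (Y : Finset ℝ) (π : Bool → ℝ → ℝ) : Prop :=
  ∀ c, ∀ y ∈ Y, 0 ≤ π c y ∧ π c y ≤ 1

/-- Institution utility `U(π) = ∑ p(c,y)·y·π(c,y)`. -/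
def util (Y : Finset ℝ) (p π : Bool → ℝ → ℝ) : ℝ :=
  ∑ c : Bool, ∑ y ∈ Y, p c y * y * π c y

/-- Selection rate of group `c`. -/
def selRate (Y : Finset ℝ) (p π : Bool → ℝ → ℝ) (c : Bool) : ℝ :=
  ∑ y ∈ Y, pCond Y p c y * π c y

/-- Disparity `Δ(π)`. -/
def disp (Y : Finset ℝ) (p π : Bool → ℝ → ℝ) : ℝ :=
  |selRate Y p π true - selRate Y p π false|

/-- Penalized objective `J(π) = U(π) − λ·g(Δ(π))`. -/
def obj (Y : Finset ℝ) (p : Bool → ℝ → ℝ) (g : ℝ → ℝ) (lam : ℝ) (π : Bool → ℝ → ℝ) : ℝ :=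
  util Y p π - lam * g (disp Y p π)

/-- Optimal policy: admissible maximizer of `J`. -/
def IsOptimal (Y : Finset ℝ) (p : Bool → ℝ → ℝ) (g : ℝ → ℝ) (lam : ℝ)
    (π : Bool → ℝ → ℝ) : Prop :=
  Admissible Y π ∧ ∀ π', Admissible Y π' → obj Y p g lam π' ≤ obj Y p g lam π

/-- `g` is nondecreasing, nonnegative, convex on `[0,∞)` with `g 0 = 0`. -/
def AdmissiblePenalty (g : ℝ → ℝ) : Prop :=
  g 0 = 0 ∧ MonotoneOn g (Set.Ici 0) ∧ ConvexOn ℝ (Set.Ici 0) g ∧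
    ∀ x ∈ Set.Ici (0 : ℝ), 0 ≤ g x

/-- `Pr(Y > 0 | c)`. -/
def posRate (Y : Finset ℝ) (p : Bool → ℝ → ℝ) (c : Bool) : ℝ :=
  ∑ y ∈ Y.filter (fun y => 0 < y), pCond Y p c y

/-- `Δ_UM = Pr(Y>0|A) − Pr(Y>0|B)`. -/
def dUM (Y : Finset ℝ) (p : Bool → ℝ → ℝ) : ℝ := posRate Y p true - posRate Y p false

/-- `E[Y₊] = ∑_{c, y>0} p(c,y)·y`, the unconstrained maximal utility. -/
def eyPos (Y : Finset ℝ) (p : Bool → ℝ → ℝ) : ℝ :=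
  ∑ c : Bool, ∑ y ∈ Y.filter (fun y => 0 < y), p c y * y

/-- The index set `𝒯_e`. -/
def TE (Y : Finset ℝ) (p : Bool → ℝ → ℝ) : Finset (ℝ × Bool) :=
  (Y ×ˢ (Finset.univ : Finset Bool)).filter
    (fun yc => (yc.2 = true ∧ 0 < yc.1 ∧ 0 < pCond Y p true yc.1) ∨
               (yc.2 = false ∧ yc.1 < 0 ∧ 0 < pCond Y p false yc.1))

lemma TE_sum (Y : Finset ℝ) (p : Bool → ℝ → ℝ) (f : ℝ × Bool → ℝ) :
    ∑ yc ∈ TE Y p, f yc =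
      (∑ y ∈ Y.filter (fun y => 0 < y ∧ 0 < pCond Y p true y), f (y, true)) +
      ∑ y ∈ Y.filter (fun y => y < 0 ∧ 0 < pCond Y p false y), f (y, false) := by
  rw [TE, Finset.sum_filter, Finset.sum_product, Finset.sum_filter, Finset.sum_filter]
  rw [← Finset.sum_add_distrib]
  refine Finset.sum_congr rfl fun y hy => ?_
  rw [Fintype.sum_bool]
  simp only []
  by_cases h1 : 0 < y ∧ 0 < pCond Y p true y <;> by_cases h2 : y < 0 ∧ 0 < pCond Y p false y <;>
    simp_all
lemma drop_q {s : Finset ℝ} {P Q : ℝ → Prop} [DecidablePred P] [DecidablePred Q]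
    (g : ℝ → ℝ) (h : ∀ y ∈ s, P y → ¬ Q y → g y = 0) :
    ∑ y ∈ s.filter (fun y => P y ∧ Q y), g y = ∑ y ∈ s.filter P, g y := by
  refine Finset.sum_subset (Finset.monotone_filter_right s fun y _ hy => hy.1) fun y hy hy2 => ?_
  simp only [Finset.mem_filter, not_and] at hy hy2
  exact h y hy.1 hy.2 (hy2 hy.1 hy.2)

section main
variable {Y : Finset ℝ} {p : Bool → ℝ → ℝ} (hp : IsPMF Y p)

include hp

lemma pCond_nonneg (c : Bool) {y : ℝ} (hy : y ∈ Y) : 0 ≤ pCond Y p c y :=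
  div_nonneg (hp.2.1 c y hy) (hp.2.2.2 c).le

lemma p_eq (c : Bool) (y : ℝ) : p c y = pCond Y p c y * pG Y p c := by
  rw [pCond, div_mul_cancel₀]
  exact (hp.2.2.2 c).ne'

lemma sum_split (g : ℝ → ℝ) :
    ∑ y ∈ Y, g y = ∑ y ∈ Y.filter (fun y => 0 < y), g y
      + ∑ y ∈ Y.filter (fun y => y < 0), g y := by
  rw [← Finset.sum_filter_add_sum_filter_not Y (fun y => 0 < y) g]
  congr 1
  refine Finset.sum_congr (Finset.filter_congr fun y hy => ?_) fun _ _ => rfl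
  have := hp.1 y hy
  constructor <;> intro h <;> simp at h ⊢ <;> [skip; linarith]
  exact lt_of_le_of_ne h this

end main
section dirB
variable {Y : Finset ℝ} {p : Bool → ℝ → ℝ} (hp : IsPMF Y p)

lemma mem_TE_true {y : ℝ} :
    (y, true) ∈ TE Y p ↔ y ∈ Y ∧ 0 < y ∧ 0 < pCond Y p true y := by
  simp [TE, Finset.mem_filter, and_assoc]

lemma mem_TE_false {y : ℝ} :
    (y, false) ∈ TE Y p ↔ y ∈ Y ∧ y < 0 ∧ 0 < pCond Y p false y := by
  simp [TE, Finset.mem_filter, and_assoc]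

include hp

lemma dirB (z : ℝ × Bool → ℝ)
    (hz1 : ∀ yc ∈ TE Y p, 0 ≤ z yc ∧ z yc ≤ pCond Y p yc.2 yc.1)
    (hz2 : (∑ yc ∈ TE Y p, z yc) = dUM Y p) :
    ∃ π, Admissible Y π ∧ selRate Y p π true = selRate Y p π false ∧
      eyPos Y p - (∑ yc ∈ TE Y p, z yc * (pG Y p yc.2 * |yc.1|)) = util Y p π := by
  set q : Bool → ℝ → ℝ := fun c y => pCond Y p c y with hq
  set π : Bool → ℝ → ℝ := fun c y =>
    if 0 < y then
      (if c then (if 0 < q true y then 1 - z (y, true) / q true y else 1) else 1)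
    else
      (if c then 0 else (if 0 < q false y then z (y, false) / q false y else 0)) with hπ
  have hqnn : ∀ c, ∀ y ∈ Y, 0 ≤ q c y := fun c y hy => pCond_nonneg hp c hy
  refine ⟨π, ?_, ?_, ?_⟩
  · -- Admissible
    intro c y hy
    rcases lt_or_ge 0 y with h0 | h0
    · cases c
      · simp [hπ, h0]
      · simp only [hπ, h0, if_pos, if_true]
        by_cases hqy : 0 < q true y
        · have hm := (mem_TE_true (p := p)).2 ⟨hy, h0, hqy⟩
          obtain ⟨h1, h2⟩ := hz1 _ hm
          rw [if_pos hqy]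
          constructor
          · have : z (y, true) / q true y ≤ 1 := by
              rw [div_le_one hqy]; exact h2
            linarith
          · have : 0 ≤ z (y, true) / q true y := div_nonneg h1 hqy.le
            linarith
        · rw [if_neg hqy]; norm_num
    · have h0' : ¬ (0 < y) := not_lt.2 h0
      cases c
      · simp only [hπ, h0', if_neg, if_false, Bool.false_eq_true]
        by_cases hqy : 0 < q false y
        · have hyneg : y < 0 := lt_of_le_of_ne h0 (hp.1 y hy)
          have hm := (mem_TE_false (p := p)).2 ⟨hy, hyneg, hqy⟩
          obtain ⟨h1, h2⟩ := hz1 _ hm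
          simp only [if_pos hqy]
          exact ⟨div_nonneg h1 hqy.le, by rw [div_le_one hqy]; exact h2⟩
        · simp [hqy]
      · simp [hπ, h0']
  · -- compute selection rates
    have hA : selRate Y p π true =
        posRate Y p true - ∑ y ∈ Y.filter (fun y => 0 < y ∧ 0 < pCond Y p true y), z (y, true) := by
      rw [selRate, sum_split hp, posRate]
      have hneg : ∑ y ∈ Y.filter (fun y => y < 0), pCond Y p true y * π true y = 0 := by
        refine Finset.sum_eq_zero fun y hy => ?_
        simp only [Finset.mem_filter] at hy
        simp [hπ, not_lt.2 hy.2.le]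
      have hpos : ∑ y ∈ Y.filter (fun y => 0 < y), pCond Y p true y * π true y =
          ∑ y ∈ Y.filter (fun y => 0 < y),
            (pCond Y p true y - if 0 < pCond Y p true y then z (y, true) else 0) := by
        refine Finset.sum_congr rfl fun y hy => ?_
        simp only [Finset.mem_filter] at hy
        by_cases hqy : 0 < q true y
        · simp only [hπ, hy.2, if_pos, if_true, if_pos (show 0 < pCond Y p true y from hqy), hq]
          field_simp [(show 0 < pCond Y p true y from hqy).ne']
        · have h0 : q true y = 0 := le_antisymm (not_lt.1 hqy) (hqnn true y hy.1)
          simp only [hπ, hy.2, if_pos, if_true, if_neg (show ¬ 0 < pCond Y p true y from hqy), hq] at h0 ⊢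
          rw [h0]; ring
      rw [hpos, hneg, Finset.sum_sub_distrib, ← Finset.sum_filter, Finset.filter_filter, add_zero]
    have hB : selRate Y p π false =
        posRate Y p false + ∑ y ∈ Y.filter (fun y => y < 0 ∧ 0 < pCond Y p false y), z (y, false) := by
      rw [selRate, sum_split hp, posRate]
      have hpos : ∑ y ∈ Y.filter (fun y => 0 < y), pCond Y p false y * π false y =
          ∑ y ∈ Y.filter (fun y => 0 < y), pCond Y p false y := by
        refine Finset.sum_congr rfl fun y hy => ?_
        simp only [Finset.mem_filter] at hy
        simp [hπ, hy.2]
      have hneg : ∑ y ∈ Y.filter (fun y => y < 0), pCond Y p false y * π false y =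
          ∑ y ∈ Y.filter (fun y => y < 0),
            (if 0 < pCond Y p false y then z (y, false) else 0) := by
        refine Finset.sum_congr rfl fun y hy => ?_
        simp only [Finset.mem_filter] at hy
        by_cases hqy : 0 < q false y
        · simp only [hπ, not_lt.2 hy.2.le, if_neg, if_false, if_pos (show 0 < pCond Y p false y from hqy), hq, Bool.false_eq_true]
          field_simp [(show 0 < pCond Y p false y from hqy).ne']
        · have h0 : q false y = 0 := le_antisymm (not_lt.1 hqy) (hqnn false y hy.1)
          simp only [hπ, not_lt.2 hy.2.le, if_neg, if_false, if_neg (show ¬ 0 < pCond Y p false y from hqy), hq,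
            Bool.false_eq_true] at h0 ⊢
          rw [h0]; ring
      rw [hpos, hneg, ← Finset.sum_filter, Finset.filter_filter]
    have hsum := hz2
    rw [TE_sum Y p z] at hsum
    rw [hA, hB, dUM] at *
    linarith
  · -- compute utility
    have hUA : ∑ y ∈ Y, p true y * y * π true y =
        (∑ y ∈ Y.filter (fun y => 0 < y), p true y * y) -
          ∑ y ∈ Y.filter (fun y => 0 < y ∧ 0 < pCond Y p true y),
            z (y, true) * (pG Y p true * y) := by
      rw [sum_split hp]
      have hneg : ∑ y ∈ Y.filter (fun y => y < 0), p true y * y * π true y = 0 := by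
        refine Finset.sum_eq_zero fun y hy => ?_
        simp only [Finset.mem_filter] at hy
        simp [hπ, not_lt.2 hy.2.le]
      have hpos : ∑ y ∈ Y.filter (fun y => 0 < y), p true y * y * π true y =
          ∑ y ∈ Y.filter (fun y => 0 < y),
            (p true y * y - if 0 < pCond Y p true y then z (y, true) * (pG Y p true * y) else 0) := by
        refine Finset.sum_congr rfl fun y hy => ?_
        simp only [Finset.mem_filter] at hy
        rw [p_eq hp true y]
        by_cases hqy : 0 < q true y
        · simp only [hπ, hy.2, if_pos, if_true, if_pos (show 0 < pCond Y p true y from hqy), hq] at hqy ⊢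
          field_simp
        · have h0 : q true y = 0 := le_antisymm (not_lt.1 hqy) (hqnn true y hy.1)
          simp only [hπ, hy.2, if_pos, if_true, if_neg (show ¬ 0 < pCond Y p true y from hqy), hq] at h0 ⊢
          rw [h0]; ring
      rw [hpos, hneg, Finset.sum_sub_distrib, ← Finset.sum_filter, Finset.filter_filter, add_zero]
    have hUB : ∑ y ∈ Y, p false y * y * π false y =
        (∑ y ∈ Y.filter (fun y => 0 < y), p false y * y) +
          ∑ y ∈ Y.filter (fun y => y < 0 ∧ 0 < pCond Y p false y),
            z (y, false) * (pG Y p false * y) := by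
      rw [sum_split hp]
      have hpos : ∑ y ∈ Y.filter (fun y => 0 < y), p false y * y * π false y =
          ∑ y ∈ Y.filter (fun y => 0 < y), p false y * y := by
        refine Finset.sum_congr rfl fun y hy => ?_
        simp only [Finset.mem_filter] at hy
        simp [hπ, hy.2]
      have hneg : ∑ y ∈ Y.filter (fun y => y < 0), p false y * y * π false y =
          ∑ y ∈ Y.filter (fun y => y < 0),
            (if 0 < pCond Y p false y then z (y, false) * (pG Y p false * y) else 0) := by
        refine Finset.sum_congr rfl fun y hy => ?_
        simp only [Finset.mem_filter] at hy
        rw [p_eq hp false y]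
        by_cases hqy : 0 < q false y
        · simp only [hπ, not_lt.2 hy.2.le, if_neg, if_false, if_pos (show 0 < pCond Y p false y from hqy), hq,
            Bool.false_eq_true] at hqy ⊢
          field_simp
        · have h0 : q false y = 0 := le_antisymm (not_lt.1 hqy) (hqnn false y hy.1)
          simp only [hπ, not_lt.2 hy.2.le, if_neg, if_false, if_neg (show ¬ 0 < pCond Y p false y from hqy), hq,
            Bool.false_eq_true] at h0 ⊢
          rw [h0]; ring
      rw [hpos, hneg, ← Finset.sum_filter, Finset.filter_filter]
    have hpen := TE_sum Y p (fun yc => z yc * (pG Y p yc.2 * |yc.1|))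
    have e4 : ∑ y ∈ Y.filter (fun y => 0 < y ∧ 0 < pCond Y p true y),
        z (y, true) * (pG Y p true * |y|) =
        ∑ y ∈ Y.filter (fun y => 0 < y ∧ 0 < pCond Y p true y),
          z (y, true) * (pG Y p true * y) := by
      refine Finset.sum_congr rfl fun y hy => ?_
      simp only [Finset.mem_filter] at hy
      rw [abs_of_pos hy.2.1]
    have e3 : ∑ y ∈ Y.filter (fun y => y < 0 ∧ 0 < pCond Y p false y),
        z (y, false) * (pG Y p false * |y|) =
        - ∑ y ∈ Y.filter (fun y => y < 0 ∧ 0 < pCond Y p false y),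
          z (y, false) * (pG Y p false * y) := by
      rw [← Finset.sum_neg_distrib]
      refine Finset.sum_congr rfl fun y hy => ?_
      simp only [Finset.mem_filter] at hy
      rw [abs_of_neg hy.2.1]; ring
    rw [util, eyPos, Fintype.sum_bool, Fintype.sum_bool, hUA, hUB, hpen, e3, e4]
    ring

end dirB
section dirA
variable {Y : Finset ℝ} {p : Bool → ℝ → ℝ} (hp : IsPMF Y p)
include hp

lemma dirA (hUM : 0 < dUM Y p) (π : Bool → ℝ → ℝ) (hadm : Admissible Y π)
    (heq : selRate Y p π true = selRate Y p π false) :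
    ∃ z : ℝ × Bool → ℝ,
      (∀ yc ∈ TE Y p, 0 ≤ z yc ∧ z yc ≤ pCond Y p yc.2 yc.1) ∧
      (∑ yc ∈ TE Y p, z yc) = dUM Y p ∧
      util Y p π ≤ eyPos Y p - ∑ yc ∈ TE Y p, z yc * (pG Y p yc.2 * |yc.1|) := by
  set w : ℝ × Bool → ℝ := fun yc =>
    if yc.2 then pCond Y p true yc.1 * (1 - π true yc.1)
    else pCond Y p false yc.1 * π false yc.1 with hw
  have hqnn : ∀ c, ∀ y ∈ Y, 0 ≤ pCond Y p c y := fun c y hy => pCond_nonneg hp c hy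
  -- bounds for w on TE
  have hwb : ∀ yc ∈ TE Y p, 0 ≤ w yc ∧ w yc ≤ pCond Y p yc.2 yc.1 := by
    rintro ⟨y, c⟩ hm
    cases c
    · rw [mem_TE_false] at hm
      obtain ⟨hyY, -, -⟩ := hm
      obtain ⟨hπ0, hπ1⟩ := hadm false y hyY
      simp only [hw, if_neg (Bool.false_ne_true)]
      constructor
      · exact mul_nonneg (hqnn false y hyY) hπ0
      · calc pCond Y p false y * π false y ≤ pCond Y p false y * 1 :=
              mul_le_mul_of_nonneg_left hπ1 (hqnn false y hyY)
          _ = pCond Y p false y := mul_one _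
    · rw [mem_TE_true] at hm
      obtain ⟨hyY, -, -⟩ := hm
      obtain ⟨hπ0, hπ1⟩ := hadm true y hyY
      simp only [hw, if_pos]
      constructor
      · exact mul_nonneg (hqnn true y hyY) (by linarith)
      · nlinarith [hqnn true y hyY]
  set σ : ℝ := ∑ yc ∈ TE Y p, w yc with hσ
  -- named partial sums
  set PA : ℝ := ∑ y ∈ Y.filter (fun y => 0 < y), pCond Y p true y * π true y with hPA
  set NA : ℝ := ∑ y ∈ Y.filter (fun y => y < 0), pCond Y p true y * π true y with hNA
  set PB : ℝ := ∑ y ∈ Y.filter (fun y => 0 < y), pCond Y p false y * π false y with hPB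
  set NB : ℝ := ∑ y ∈ Y.filter (fun y => y < 0), pCond Y p false y * π false y with hNB
  have hsrA : selRate Y p π true = PA + NA := sum_split hp _
  have hsrB : selRate Y p π false = PB + NB := sum_split hp _
  have hσval : σ = posRate Y p true - PA + NB := by
    rw [hσ, TE_sum]
    have h1 : ∑ y ∈ Y.filter (fun y => 0 < y ∧ 0 < pCond Y p true y), w (y, true) =
        ∑ y ∈ Y.filter (fun y => 0 < y), (pCond Y p true y - pCond Y p true y * π true y) := by
      rw [drop_q]
      · exact Finset.sum_congr rfl fun y hy => by simp only [hw, if_pos]; ring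
      · intro y hyY hyp hq0
        have : pCond Y p true y = 0 := le_antisymm (not_lt.1 hq0) (hqnn true y hyY)
        simp [hw, this]
    have h2 : ∑ y ∈ Y.filter (fun y => y < 0 ∧ 0 < pCond Y p false y), w (y, false) = NB := by
      rw [drop_q]
      · exact Finset.sum_congr rfl fun y hy => by simp [hw]
      · intro y hyY hyp hq0
        have : pCond Y p false y = 0 := le_antisymm (not_lt.1 hq0) (hqnn false y hyY)
        simp [hw, this]
    rw [h1, h2, Finset.sum_sub_distrib, posRate, hPA]
  have hNAnn : 0 ≤ NA := Finset.sum_nonneg fun y hy => by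
    simp only [Finset.mem_filter] at hy
    exact mul_nonneg (hqnn true y hy.1) (hadm true y hy.1).1
  have hPBle : PB ≤ posRate Y p false := by
    rw [hPB, posRate]
    refine Finset.sum_le_sum fun y hy => ?_
    simp only [Finset.mem_filter] at hy
    calc pCond Y p false y * π false y ≤ pCond Y p false y * 1 :=
          mul_le_mul_of_nonneg_left (hadm false y hy.1).2 (hqnn false y hy.1)
      _ = pCond Y p false y := mul_one _
  have hσge : dUM Y p ≤ σ := by
    rw [hσval, dUM]
    have : PA + NA = PB + NB := by rw [← hsrA, ← hsrB, heq]
    linarith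
  have hσpos : 0 < σ := lt_of_lt_of_le hUM hσge
  -- penalty of w vs utility
  have hpenw : util Y p π ≤ eyPos Y p - ∑ yc ∈ TE Y p, w yc * (pG Y p yc.2 * |yc.1|) := by
    rw [TE_sum]
    have h1 : ∑ y ∈ Y.filter (fun y => 0 < y ∧ 0 < pCond Y p true y),
        w (y, true) * (pG Y p true * |y|) =
        ∑ y ∈ Y.filter (fun y => 0 < y), (p true y * y - p true y * y * π true y) := by
      rw [drop_q]
      · refine Finset.sum_congr rfl fun y hy => ?_
        simp only [Finset.mem_filter] at hy
        rw [abs_of_pos hy.2, p_eq hp true y]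
        simp only [hw, if_pos]
        ring
      · intro y hyY hyp hq0
        have : pCond Y p true y = 0 := le_antisymm (not_lt.1 hq0) (hqnn true y hyY)
        simp [hw, this]
    have h2 : ∑ y ∈ Y.filter (fun y => y < 0 ∧ 0 < pCond Y p false y),
        w (y, false) * (pG Y p false * |y|) =
        ∑ y ∈ Y.filter (fun y => y < 0), -(p false y * y * π false y) := by
      rw [drop_q]
      · refine Finset.sum_congr rfl fun y hy => ?_
        simp only [Finset.mem_filter] at hy
        rw [abs_of_neg hy.2, p_eq hp false y]
        simp only [hw, if_neg (Bool.false_ne_true)]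
        ring
      · intro y hyY hyp hq0
        have : pCond Y p false y = 0 := le_antisymm (not_lt.1 hq0) (hqnn false y hyY)
        simp [hw, this]
    rw [h1, h2, util, eyPos, Fintype.sum_bool, Fintype.sum_bool,
      sum_split hp (fun y => p true y * y * π true y),
      sum_split hp (fun y => p false y * y * π false y),
      Finset.sum_sub_distrib, Finset.sum_neg_distrib]
    have hposB : ∑ y ∈ Y.filter (fun y => 0 < y), p false y * y * π false y ≤
        ∑ y ∈ Y.filter (fun y => 0 < y), p false y * y := by
      refine Finset.sum_le_sum fun y hy => ?_
      simp only [Finset.mem_filter] at hy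
      have := hadm false y hy.1
      have h := mul_nonneg (mul_nonneg (hp.2.1 false y hy.1) hy.2.le) (sub_nonneg.2 this.2)
      nlinarith [h]
    have hnegA : 0 ≤ ∑ y ∈ Y.filter (fun y => y < 0), -(p true y * y * π true y) := by
      refine Finset.sum_nonneg fun y hy => ?_
      simp only [Finset.mem_filter] at hy
      have := hadm true y hy.1
      have h := mul_nonneg (mul_nonneg (hp.2.1 true y hy.1) (neg_nonneg.2 hy.2.le)) this.1
      nlinarith [h]
    rw [Finset.sum_neg_distrib] at hnegA
    linarith
  -- penalty of w is nonnegative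
  have hpennn : 0 ≤ ∑ yc ∈ TE Y p, w yc * (pG Y p yc.2 * |yc.1|) :=
    Finset.sum_nonneg fun yc hyc =>
      mul_nonneg (hwb yc hyc).1 (mul_nonneg (hp.2.2.2 yc.2).le (abs_nonneg _))
  -- scale
  set t : ℝ := dUM Y p / σ with ht
  have ht0 : 0 < t := div_pos hUM hσpos
  have ht1 : t ≤ 1 := (div_le_one hσpos).2 hσge
  refine ⟨fun yc => t * w yc, fun yc hyc => ?_, ?_, ?_⟩
  · obtain ⟨h1, h2⟩ := hwb yc hyc
    constructor
    · exact mul_nonneg ht0.le h1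
    · calc t * w yc ≤ 1 * w yc := mul_le_mul_of_nonneg_right ht1 h1
        _ = w yc := one_mul _
        _ ≤ pCond Y p yc.2 yc.1 := h2
  · rw [← Finset.mul_sum, ← hσ, ht, div_mul_cancel₀ _ hσpos.ne']
  · have : ∑ yc ∈ TE Y p, t * w yc * (pG Y p yc.2 * |yc.1|) =
        t * ∑ yc ∈ TE Y p, w yc * (pG Y p yc.2 * |yc.1|) := by
      rw [Finset.mul_sum]; exact Finset.sum_congr rfl fun _ _ => by ring
    rw [this]
    nlinarith

end dirA
/-- Reformulation of the demographic-parity problem. Assume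
`Δ_UM > 0`. The supremum of `U(π)` over admissible policies with equal selection
rates equals the supremum, over `z : 𝒯_e → ℝ` with `0 ≤ z_{yc} ≤ p(y|c)` and
`∑ z = Δ_UM`, of `E[Y₊] − ∑ z_{yc}·p(c)·|y|`. -/
theorem stmt_8 (Y : Finset ℝ) (p : Bool → ℝ → ℝ) (hp : IsPMF Y p)
    (hUM : 0 < dUM Y p) :
    sSup {v : ℝ | ∃ π, Admissible Y π ∧
        selRate Y p π true = selRate Y p π false ∧ v = util Y p π} =
      sSup {v : ℝ | ∃ z : ℝ × Bool → ℝ,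
        (∀ yc ∈ TE Y p, 0 ≤ z yc ∧ z yc ≤ pCond Y p yc.2 yc.1) ∧
        (∑ yc ∈ TE Y p, z yc) = dUM Y p ∧
        v = eyPos Y p - ∑ yc ∈ TE Y p, z yc * (pG Y p yc.2 * |yc.1|)} := by
  set X := {v : ℝ | ∃ π, Admissible Y π ∧
      selRate Y p π true = selRate Y p π false ∧ v = util Y p π} with hX
  set Z := {v : ℝ | ∃ z : ℝ × Bool → ℝ,
      (∀ yc ∈ TE Y p, 0 ≤ z yc ∧ z yc ≤ pCond Y p yc.2 yc.1) ∧
      (∑ yc ∈ TE Y p, z yc) = dUM Y p ∧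
      v = eyPos Y p - ∑ yc ∈ TE Y p, z yc * (pG Y p yc.2 * |yc.1|)} with hZ
  have hzero : Admissible Y (fun _ _ => (0 : ℝ)) ∧
      selRate Y p (fun _ _ => (0 : ℝ)) true = selRate Y p (fun _ _ => (0 : ℝ)) false := by
    refine ⟨fun c y _ => by norm_num, ?_⟩
    simp [selRate]
  have hXne : X.Nonempty := ⟨util Y p (fun _ _ => 0), fun _ _ => 0, hzero.1, hzero.2, rfl⟩
  have hXbdd : BddAbove X := by
    refine ⟨∑ c : Bool, ∑ y ∈ Y, |p c y * y|, fun v hv => ?_⟩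
    obtain ⟨π, hadm, -, rfl⟩ := hv
    rw [util]
    refine Finset.sum_le_sum fun c _ => Finset.sum_le_sum fun y hy => ?_
    obtain ⟨h0, h1⟩ := hadm c y hy
    calc p c y * y * π c y ≤ |p c y * y * π c y| := le_abs_self _
      _ = |p c y * y| * |π c y| := abs_mul _ _
      _ ≤ |p c y * y| * 1 := by
          refine mul_le_mul_of_nonneg_left ?_ (abs_nonneg _)
          rw [abs_of_nonneg h0]; exact h1
      _ = |p c y * y| := mul_one _
  have hZsub : Z ⊆ X := by
    rintro v ⟨z, hz1, hz2, rfl⟩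
    obtain ⟨π, hadm, heq, hval⟩ := dirB hp z hz1 hz2
    exact ⟨π, hadm, heq, hval⟩
  have hZne : Z.Nonempty := by
    obtain ⟨z, hz1, hz2, -⟩ := dirA hp hUM (fun _ _ => 0) hzero.1 hzero.2
    exact ⟨_, z, hz1, hz2, rfl⟩
  have hZbdd : BddAbove Z := hXbdd.mono hZsub
  apply le_antisymm
  · refine csSup_le hXne fun v hv => ?_
    obtain ⟨π, hadm, heq, rfl⟩ := hv
    obtain ⟨z, hz1, hz2, hle⟩ := dirA hp hUM π hadm heq
    exact hle.trans (le_csSup hZbdd ⟨z, hz1, hz2, rfl⟩)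
  · exact csSup_le_csSup hXbdd hZne hZsub
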